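/- Let R > 0, m₀ > 0, T > 0. Suppose m, φ : B̄_R × [0,T] → ℝ are C² in the space variable with spatial derivatives jointly continuous, m is C¹ in time, ρ : ℝ × [0,T] → ℝ is 2π-periodic in its first argument and C¹, and X_c : [0,T] → ℝ is C¹, and that they satisfy: ∂_t m(x,t) = Δm(x,t) − m₀ Δφ(x,t) for all x ∈ B_R and t ∈ (0,T); ∇m(R cos θ, R sin θ, t) · (cos θ, sin θ) = 0 for all θ and t; and ∂_t ρ(θ,t) + X_c'(t) cos θ = ∇φ(R cos θ, R sin θ, t) · (cos θ, sin θ) for all θ and t. Then the quantity M(t) := ∫_{B_R} m(x,t) dx + m₀ R ∫_{−π}^{π} ρ(θ,t) dθ is constant on [0,T]. -/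

import Mathlib

open MeasureTheory Metric Set
open scoped RealInnerProductSpace

/-- The Laplacian of `f : ℝ² → ℝ`, as the sum of the second partial derivatives in the
standard coordinate directions. -/
noncomputable def laplacian2 (f : EuclideanSpace ℝ (Fin 2) → ℝ)
    (x : EuclideanSpace ℝ (Fin 2)) : ℝ :=
  ∑ i : Fin 2,
    fderiv ℝ (fun y => fderiv ℝ f y (EuclideanSpace.single i (1:ℝ))) x
      (EuclideanSpace.single i (1:ℝ))

/-- The point of `ℝ²` with Cartesian coordinates `(a, b)`. -/
noncomputable def pt2 (a b : ℝ) : EuclideanSpace ℝ (Fin 2) :=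
  (WithLp.equiv 2 (Fin 2 → ℝ)).symm ![a, b]

namespace MCA

abbrev E2 := EuclideanSpace ℝ (Fin 2)

noncomputable def L : ℝ × ℝ →L[ℝ] E2 :=
  (ContinuousLinearMap.fst ℝ ℝ ℝ).smulRight (EuclideanSpace.single 0 (1:ℝ)) +
  (ContinuousLinearMap.snd ℝ ℝ ℝ).smulRight (EuclideanSpace.single 1 (1:ℝ))

noncomputable def Φ (r θ : ℝ) : E2 := L (r * Real.cos θ, r * Real.sin θ)
noncomputable def uv (θ : ℝ) : E2 := L (Real.cos θ, Real.sin θ)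
noncomputable def wv (θ : ℝ) : E2 := L (-Real.sin θ, Real.cos θ)

lemma L_apply_coord (p : ℝ × ℝ) (i : Fin 2) : L p i = ![p.1, p.2] i := by
  fin_cases i <;> simp [L, EuclideanSpace.single_apply]

lemma L_eq_pt2 (p : ℝ × ℝ) : L p = pt2 p.1 p.2 := by
  ext i; rw [L_apply_coord]; rfl

lemma Φ_eq_pt2 (r θ : ℝ) : Φ r θ = pt2 (r * Real.cos θ) (r * Real.sin θ) := L_eq_pt2 _
lemma uv_eq_pt2 (θ : ℝ) : uv θ = pt2 (Real.cos θ) (Real.sin θ) := L_eq_pt2 _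

lemma norm_L (p : ℝ × ℝ) : ‖L p‖ = Real.sqrt (p.1 ^ 2 + p.2 ^ 2) := by
  rw [EuclideanSpace.norm_eq]
  congr 1
  rw [Fin.sum_univ_two]
  simp [L_apply_coord, sq_abs]

lemma norm_Φ (r θ : ℝ) : ‖Φ r θ‖ = |r| := by
  rw [Φ, norm_L]
  have : (r * Real.cos θ) ^ 2 + (r * Real.sin θ) ^ 2 = r ^ 2 := by
    have := Real.sin_sq_add_cos_sq θ; nlinarith
  rw [this, Real.sqrt_sq_eq_abs]

lemma Φ_mem_ball {r θ R : ℝ} (h : |r| < R) : Φ r θ ∈ ball (0 : E2) R := by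
  rw [mem_ball_zero_iff, norm_Φ]; exact h

lemma Φ_mem_closedBall {r θ R : ℝ} (h : |r| ≤ R) : Φ r θ ∈ closedBall (0 : E2) R := by
  rw [mem_closedBall_zero_iff, norm_Φ]; exact h

/-- derivative of `r ↦ Φ r θ` -/
lemma hasDerivAt_Φ_r (r θ : ℝ) : HasDerivAt (fun s => Φ s θ) (uv θ) r := by
  have h : HasDerivAt (fun s : ℝ => (s * Real.cos θ, s * Real.sin θ))
      (Real.cos θ, Real.sin θ) r := by
    simpa using ((hasDerivAt_id r).mul_const (Real.cos θ)).prodMk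
      ((hasDerivAt_id r).mul_const (Real.sin θ))
  exact L.hasFDerivAt.comp_hasDerivAt r h

/-- derivative of `ψ ↦ Φ r ψ` -/
lemma hasDerivAt_Φ_θ (r θ : ℝ) : HasDerivAt (fun ψ => Φ r ψ) (r • wv θ) θ := by
  have h : HasDerivAt (fun ψ : ℝ => (r * Real.cos ψ, r * Real.sin ψ))
      (r * -Real.sin θ, r * Real.cos θ) θ :=
    ((Real.hasDerivAt_cos θ).const_mul r).prodMk ((Real.hasDerivAt_sin θ).const_mul r)
  have : HasDerivAt (fun ψ => Φ r ψ) (L (r * -Real.sin θ, r * Real.cos θ)) θ :=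
    L.hasFDerivAt.comp_hasDerivAt θ h
  convert this using 1
  rw [wv, ← L.map_smul]
  rfl

lemma hasDerivAt_wv (θ : ℝ) : HasDerivAt wv (-uv θ) θ := by
  have h : HasDerivAt (fun ψ : ℝ => (-Real.sin ψ, Real.cos ψ))
      (-Real.cos θ, -Real.sin θ) θ :=
    ((Real.hasDerivAt_sin θ).neg).prodMk (Real.hasDerivAt_cos θ)
  have : HasDerivAt wv (L (-Real.cos θ, -Real.sin θ)) θ := L.hasFDerivAt.comp_hasDerivAt θ h
  convert this using 1
  rw [uv, ← L.map_neg]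
  congr 1

/-- the key algebraic identity: for any bilinear `S`, `S u u + S w w = S e₀ e₀ + S e₁ e₁`. -/
lemma sum_identity (S : E2 →L[ℝ] E2 →L[ℝ] ℝ) (θ : ℝ) :
    S (uv θ) (uv θ) + S (wv θ) (wv θ)
      = S (EuclideanSpace.single 0 (1:ℝ)) (EuclideanSpace.single 0 (1:ℝ))
        + S (EuclideanSpace.single 1 (1:ℝ)) (EuclideanSpace.single 1 (1:ℝ)) := by
  have hu : uv θ = Real.cos θ • EuclideanSpace.single 0 (1:ℝ)
      + Real.sin θ • EuclideanSpace.single 1 (1:ℝ) := by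
    simp [uv, L]
  have hw : wv θ = (-Real.sin θ) • EuclideanSpace.single 0 (1:ℝ)
      + Real.cos θ • EuclideanSpace.single 1 (1:ℝ) := by
    simp [wv, L]
  set c := Real.cos θ
  set s := Real.sin θ
  have hcs : s ^ 2 + c ^ 2 = 1 := Real.sin_sq_add_cos_sq θ
  rw [hu, hw]
  simp only [map_add, _root_.map_smul, ContinuousLinearMap.add_apply,
    ContinuousLinearMap.smul_apply, ContinuousLinearMap.coe_smul', Pi.smul_apply, smul_eq_mul]
  linear_combination (S (EuclideanSpace.single 0 (1:ℝ)) (EuclideanSpace.single 0 (1:ℝ))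
    + S (EuclideanSpace.single 1 (1:ℝ)) (EuclideanSpace.single 1 (1:ℝ))) * hcs

/-- on a neighborhood of a point where `f` is C², the `laplacian2` equals the sum of
second iterated derivatives. -/
lemma laplacian2_eq (f : E2 → ℝ) (x : E2) (hf : ContDiffAt ℝ 2 f x) :
    laplacian2 f x
      = iteratedFDeriv ℝ 2 f x
          ![EuclideanSpace.single 0 (1:ℝ), EuclideanSpace.single 0 (1:ℝ)]
        + iteratedFDeriv ℝ 2 f x
          ![EuclideanSpace.single 1 (1:ℝ), EuclideanSpace.single 1 (1:ℝ)] := by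
  have hd : DifferentiableAt ℝ (fderiv ℝ f) x :=
    (hf.fderiv_right (m := 1) le_rfl).differentiableAt one_ne_zero
  have key : ∀ v : E2, fderiv ℝ (fun y => fderiv ℝ f y v) x
      = (fderiv ℝ (fderiv ℝ f) x).flip v := by
    intro v
    have h1 : HasFDerivAt (fun y => fderiv ℝ f y v)
        ((ContinuousLinearMap.apply ℝ ℝ v).comp (fderiv ℝ (fderiv ℝ f) x)) x :=
      (ContinuousLinearMap.apply ℝ ℝ v).hasFDerivAt.comp x hd.hasFDerivAt
    rw [h1.fderiv]
    rfl
  rw [laplacian2, Fin.sum_univ_two, key, key,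
    iteratedFDeriv_two_apply, iteratedFDeriv_two_apply]
  simp [ContinuousLinearMap.flip_apply, Matrix.cons_val_zero, Matrix.cons_val_one]


lemma hasDerivAt_fderiv_comp {f : E2 → ℝ} {γ : ℝ → E2} {γ' v : E2} {r : ℝ}
    (hγ : HasDerivAt γ γ' r) (hf : ContDiffAt ℝ 2 f (γ r)) :
    HasDerivAt (fun s => fderiv ℝ f (γ s) v)
      (iteratedFDeriv ℝ 2 f (γ r) ![γ', v]) r := by
  have hd : DifferentiableAt ℝ (fderiv ℝ f) (γ r) :=
    (hf.fderiv_right (m := 1) le_rfl).differentiableAt one_ne_zero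
  have h1 : HasDerivAt (fun s => fderiv ℝ f (γ s)) (fderiv ℝ (fderiv ℝ f) (γ r) γ') r :=
    hd.hasFDerivAt.comp_hasDerivAt r hγ
  have h2 := h1.clm_apply (hasDerivAt_const r v)
  simpa [iteratedFDeriv_two_apply] using h2

lemma continuous_uv : Continuous uv :=
  L.continuous.comp (Real.continuous_cos.prodMk Real.continuous_sin)

lemma continuous_wv : Continuous wv :=
  L.continuous.comp (Real.continuous_sin.neg.prodMk Real.continuous_cos)

lemma continuous_Φ : Continuous (fun p : ℝ × ℝ => Φ p.1 p.2) :=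
  L.continuous.comp ((continuous_fst.mul (Real.continuous_cos.comp continuous_snd)).prodMk
    (continuous_fst.mul (Real.continuous_sin.comp continuous_snd)))

lemma fderiv_continuousOn {f : E2 → ℝ} {s : Set E2}
    (h : ContinuousOn (fun x => iteratedFDeriv ℝ 1 f x) s) :
    ContinuousOn (fun x => fderiv ℝ f x) s := by
  have he : ∀ x, fderiv ℝ f x = (continuousMultilinearCurryFin1 ℝ E2 ℝ)
      (iteratedFDeriv ℝ 1 f x) := by
    intro x; ext v; simp [iteratedFDeriv_one_apply, Fin.snoc]
  simp only [he]
  exact (continuousMultilinearCurryFin1 ℝ E2 ℝ).continuous.comp_continuousOn h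

noncomputable def ME : (ℝ × ℝ) ≃ᵐ E2 :=
  (MeasurableEquiv.finTwoArrow (α := ℝ)).symm.trans
    (MeasurableEquiv.toLp 2 (Fin 2 → ℝ))

lemma ME_coe : ⇑ME = fun p : ℝ × ℝ => L p := by
  funext p
  ext i
  fin_cases i <;>
    simp [ME, L, MeasurableEquiv.finTwoArrow, EuclideanSpace.single_apply,
      MeasurableEquiv.toLp] <;> rfl

lemma ME_mp : MeasurePreserving ME volume volume :=
  ((EuclideanSpace.volume_preserving_symm_measurableEquiv_toLp (Fin 2)).symm).comp
    ((volume_preserving_finTwoArrow ℝ).symm)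

lemma integral_comp_L (g : E2 → ℝ) : ∫ p : ℝ × ℝ, g (L p) = ∫ x : E2, g x := by
  rw [show (fun p : ℝ × ℝ => g (L p)) = fun p => g (ME p) by rw [ME_coe]]
  exact ME_mp.integral_comp ME.measurableEmbedding g


theorem disk_div {R : ℝ} (hR : 0 < R) (f : E2 → ℝ)
    (hf : ContDiffOn ℝ 2 f (closedBall 0 R))
    (hc1 : ContinuousOn (fun x => iteratedFDeriv ℝ 1 f x) (closedBall (0:E2) R))
    (hc2 : ContinuousOn (fun x => iteratedFDeriv ℝ 2 f x) (closedBall (0:E2) R)) :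
    ∫ x in ball (0:E2) R, laplacian2 f x
      = R * ∫ θ in (-Real.pi)..Real.pi, fderiv ℝ f (Φ R θ) (uv θ) := by
  have hπ : -Real.pi < Real.pi := by linarith [Real.pi_pos]
  set e0 : E2 := EuclideanSpace.single 0 (1:ℝ) with he0
  set e1 : E2 := EuclideanSpace.single 1 (1:ℝ) with he1
  set Ω : Set (ℝ × ℝ) := Ioo 0 R ×ˢ Ioo (-Real.pi) Real.pi with hΩdef
  have hΩmeas : MeasurableSet Ω := measurableSet_Ioo.prod measurableSet_Ioo
  have hCD : ∀ x ∈ ball (0:E2) R, ContDiffAt ℝ 2 f x := fun x hx =>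
    hf.contDiffAt (Filter.mem_of_superset (isOpen_ball.mem_nhds hx) ball_subset_closedBall)
  set g : E2 → ℝ := fun x => iteratedFDeriv ℝ 2 f x ![e0, e0] + iteratedFDeriv ℝ 2 f x ![e1, e1]
    with hgdef
  have hfd : ContinuousOn (fun x => fderiv ℝ f x) (closedBall (0:E2) R) := fderiv_continuousOn hc1
  set K : Set (ℝ × ℝ) := Icc 0 R ×ˢ Icc (-Real.pi) Real.pi with hKdef
  have hKcomp : IsCompact K := isCompact_Icc.prod isCompact_Icc
  have hmaps : MapsTo (fun p : ℝ × ℝ => Φ p.1 p.2) K (closedBall (0:E2) R) := by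
    intro p hp
    exact Φ_mem_closedBall (abs_le.2 ⟨by linarith [hp.1.1], hp.1.2⟩)
  have hΦK : ContinuousOn (fun p : ℝ × ℝ => Φ p.1 p.2) K := continuous_Φ.continuousOn
  set A : ℝ × ℝ → ℝ := fun p => fderiv ℝ f (Φ p.1 p.2) (uv p.2) with hAdef
  set D1 : ℝ × ℝ → ℝ := fun p =>
    A p + p.1 * iteratedFDeriv ℝ 2 f (Φ p.1 p.2) ![uv p.2, uv p.2] with hD1def
  set D2 : ℝ × ℝ → ℝ := fun p =>
    p.1 * iteratedFDeriv ℝ 2 f (Φ p.1 p.2) ![wv p.2, wv p.2] - A p with hD2def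
  have hAK : ContinuousOn A K :=
    (hfd.comp hΦK hmaps).clm_apply (continuous_uv.comp continuous_snd).continuousOn
  have hvec_u : Continuous (fun p : ℝ × ℝ => (![uv p.2, uv p.2] : Fin 2 → E2)) := by
    refine continuous_pi fun i => ?_
    fin_cases i <;> exact continuous_uv.comp continuous_snd
  have hvec_w : Continuous (fun p : ℝ × ℝ => (![wv p.2, wv p.2] : Fin 2 → E2)) := by
    refine continuous_pi fun i => ?_
    fin_cases i <;> exact continuous_wv.comp continuous_snd
  have h2u : ContinuousOn (fun p : ℝ × ℝ =>
      iteratedFDeriv ℝ 2 f (Φ p.1 p.2) ![uv p.2, uv p.2]) K :=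
    (hc2.comp hΦK hmaps).eval hvec_u.continuousOn
  have h2w : ContinuousOn (fun p : ℝ × ℝ =>
      iteratedFDeriv ℝ 2 f (Φ p.1 p.2) ![wv p.2, wv p.2]) K :=
    (hc2.comp hΦK hmaps).eval hvec_w.continuousOn
  have hD1K : ContinuousOn D1 K := hAK.add (continuous_fst.continuousOn.mul h2u)
  have hD2K : ContinuousOn D2 K := (continuous_fst.continuousOn.mul h2w).sub hAK
  have hΩK : Ω ⊆ K := prod_mono Ioo_subset_Icc_self Ioo_subset_Icc_self
  have hD1int : IntegrableOn D1 Ω := (hD1K.integrableOn_compact hKcomp).mono_set hΩK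
  have hD2int : IntegrableOn D2 Ω := (hD2K.integrableOn_compact hKcomp).mono_set hΩK
  have hstep1 : ∫ x in ball (0:E2) R, laplacian2 f x = ∫ x in ball (0:E2) R, g x :=
    setIntegral_congr_fun measurableSet_ball fun x hx => laplacian2_eq f x (hCD x hx)
  have hstep2 : ∫ x in ball (0:E2) R, g x = ∫ p in Ω, p.1 * g (Φ p.1 p.2) := by
    rw [← integral_indicator measurableSet_ball, ← integral_comp_L,
      ← integral_comp_polarCoord_symm]
    have hsub : Ω ⊆ polarCoord.target := prod_mono Ioo_subset_Ioi_self subset_rfl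
    have hcongr : ∀ p ∈ polarCoord.target,
        p.1 • (ball (0:E2) R).indicator g (L (polarCoord.symm p))
          = Ω.indicator (fun q : ℝ × ℝ => q.1 * g (Φ q.1 q.2)) p := by
      rintro ⟨r, θ⟩ hp
      have hr : 0 < r := hp.1
      have hθ : θ ∈ Ioo (-Real.pi) Real.pi := hp.2
      have hLp : L (polarCoord.symm (r, θ)) = Φ r θ := rfl
      rw [hLp]
      by_cases h : r < R
      · rw [indicator_of_mem (Φ_mem_ball (by rwa [abs_of_pos hr])),
          indicator_of_mem (show ((r,θ) : ℝ × ℝ) ∈ Ω from ⟨⟨hr, h⟩, hθ⟩)]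
        simp [smul_eq_mul]
      · rw [indicator_of_notMem (fun hmem => by
            rw [mem_ball_zero_iff, norm_Φ, abs_of_pos hr] at hmem; exact h hmem),
          indicator_of_notMem (fun hmem => h hmem.1.2), smul_zero]
    rw [setIntegral_congr_fun (show MeasurableSet polarCoord.target from
        measurableSet_Ioi.prod measurableSet_Ioo) hcongr,
      setIntegral_indicator hΩmeas, inter_eq_self_of_subset_right hsub]
  have hsum : ∀ p : ℝ × ℝ, p.1 * g (Φ p.1 p.2) = D1 p + D2 p := by
    intro p
    have hid := sum_identity (fderiv ℝ (fderiv ℝ f) (Φ p.1 p.2)) p.2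
    rw [← he0, ← he1] at hid
    simp only [hgdef, hD1def, hD2def, hAdef, iteratedFDeriv_two_apply,
      Matrix.cons_val_zero, Matrix.cons_val_one, Matrix.head_cons]
    linear_combination (-p.1) * hid
  have hD1deriv : ∀ θ ∈ Ioo (-Real.pi) Real.pi, ∀ r ∈ Ioo (0:ℝ) R,
      HasDerivAt (fun s => s * A (s, θ)) (D1 (r, θ)) r := by
    intro θ hθ r hr
    have hx : Φ r θ ∈ ball (0:E2) R := Φ_mem_ball (by rw [abs_of_pos hr.1]; exact hr.2)
    have h1 : HasDerivAt (fun s : ℝ => A (s, θ))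
        (iteratedFDeriv ℝ 2 f (Φ r θ) ![uv θ, uv θ]) r := by
      simpa [hAdef] using hasDerivAt_fderiv_comp (hasDerivAt_Φ_r r θ) (hCD _ hx)
    have h2 := (hasDerivAt_id r).mul h1
    simp only [hD1def]
    simp only [one_mul, id_eq] at h2
    exact h2
  have hinner1 : ∀ θ ∈ Ioo (-Real.pi) Real.pi,
      (∫ r in Ioo (0:ℝ) R, D1 (r, θ)) = R * A (R, θ) := by
    intro θ hθ
    have hmap : MapsTo (fun r : ℝ => ((r, θ) : ℝ × ℝ)) (Icc 0 R) K := fun r hr =>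
      ⟨hr, ⟨hθ.1.le, hθ.2.le⟩⟩
    have hconts : ContinuousOn (fun r : ℝ => r * A (r, θ)) (Icc 0 R) :=
      continuousOn_id.mul
        (hAK.comp ((continuous_id.prodMk continuous_const).continuousOn) hmap)
    have hint : IntervalIntegrable (fun r => D1 (r, θ)) volume 0 R := by
      apply ContinuousOn.intervalIntegrable
      rw [uIcc_of_le hR.le]
      exact hD1K.comp ((continuous_id.prodMk continuous_const).continuousOn) hmap
    have hftc := intervalIntegral.integral_eq_sub_of_hasDeriv_right_of_le hR.le hconts
      (fun r hr => (hD1deriv θ hθ r hr).hasDerivWithinAt) hint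
    rw [← integral_Ioc_eq_integral_Ioo, ← intervalIntegral.integral_of_le hR.le, hftc]
    ring
  have hD2deriv : ∀ r ∈ Ioo (0:ℝ) R, ∀ θ : ℝ,
      HasDerivAt (fun ψ => fderiv ℝ f (Φ r ψ) (wv ψ)) (D2 (r, θ)) θ := by
    intro r hr θ
    have hx : Φ r θ ∈ ball (0:E2) R := Φ_mem_ball (by rw [abs_of_pos hr.1]; exact hr.2)
    have hd : DifferentiableAt ℝ (fderiv ℝ f) (Φ r θ) :=
      ((hCD _ hx).fderiv_right (m := 1) le_rfl).differentiableAt one_ne_zero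
    have hcd : HasDerivAt (fun ψ => fderiv ℝ f (Φ r ψ))
        (fderiv ℝ (fderiv ℝ f) (Φ r θ) (r • wv θ)) θ :=
      hd.hasFDerivAt.comp_hasDerivAt θ (hasDerivAt_Φ_θ r θ)
    have h2 := hcd.clm_apply (hasDerivAt_wv θ)
    have heq2 : D2 (r, θ) = fderiv ℝ (fderiv ℝ f) (Φ r θ) (r • wv θ) (wv θ)
        + fderiv ℝ f (Φ r θ) (-uv θ) := by
      simp only [hD2def, hAdef, iteratedFDeriv_two_apply, _root_.map_smul,
        ContinuousLinearMap.smul_apply, map_neg, smul_eq_mul,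
        Matrix.cons_val_zero, Matrix.cons_val_one, Matrix.head_cons]
      ring
    rw [heq2]; exact h2
  have hinner2 : ∀ r ∈ Ioo (0:ℝ) R, (∫ θ in Ioo (-Real.pi) Real.pi, D2 (r, θ)) = 0 := by
    intro r hr
    have hmap : MapsTo (fun θ : ℝ => ((r, θ) : ℝ × ℝ)) (Icc (-Real.pi) Real.pi) K :=
      fun θ hθ => ⟨⟨hr.1.le, hr.2.le⟩, hθ⟩
    have hint : IntervalIntegrable (fun θ => D2 (r, θ)) volume (-Real.pi) Real.pi := by
      apply ContinuousOn.intervalIntegrable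
      rw [uIcc_of_le hπ.le]
      exact hD2K.comp ((continuous_const.prodMk continuous_id).continuousOn) hmap
    have hftc := intervalIntegral.integral_eq_sub_of_hasDerivAt
      (fun θ _ => hD2deriv r hr θ) hint
    have hper : fderiv ℝ f (Φ r Real.pi) (wv Real.pi)
        = fderiv ℝ f (Φ r (-Real.pi)) (wv (-Real.pi)) := by
      have h1 : Φ r Real.pi = Φ r (-Real.pi) := by simp [Φ]
      have h2' : wv Real.pi = wv (-Real.pi) := by simp [wv]
      rw [h1, h2']
    rw [← integral_Ioc_eq_integral_Ioo, ← intervalIntegral.integral_of_le hπ.le, hftc, hper,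
      sub_self]
  have hprod : (volume : Measure (ℝ × ℝ)).restrict Ω
      = ((volume : Measure ℝ).restrict (Ioo 0 R)).prod
          ((volume : Measure ℝ).restrict (Ioo (-Real.pi) Real.pi)) := by
    rw [Measure.prod_restrict, ← Measure.volume_eq_prod ℝ ℝ]
  have hI1 : ∫ p in Ω, D1 p = R * ∫ θ in Ioo (-Real.pi) Real.pi, A (R, θ) := by
    have hint : Integrable (fun z : ℝ × ℝ => D1 z)
        (((volume : Measure ℝ).restrict (Ioo 0 R)).prod
          ((volume : Measure ℝ).restrict (Ioo (-Real.pi) Real.pi))) := by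
      rw [← hprod]; exact hD1int
    have hswap := MeasureTheory.integral_integral_swap
      (f := fun r θ => D1 (r, θ))
      (μ := (volume : Measure ℝ).restrict (Ioo 0 R))
      (ν := (volume : Measure ℝ).restrict (Ioo (-Real.pi) Real.pi))
      (by exact hint)
    calc ∫ p in Ω, D1 p
        = ∫ r in Ioo (0:ℝ) R, ∫ θ in Ioo (-Real.pi) Real.pi, D1 (r, θ) := by
          rw [hprod]; exact MeasureTheory.integral_prod _ hint
      _ = ∫ θ in Ioo (-Real.pi) Real.pi, ∫ r in Ioo (0:ℝ) R, D1 (r, θ) := hswap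
      _ = ∫ θ in Ioo (-Real.pi) Real.pi, R * A (R, θ) :=
          setIntegral_congr_fun measurableSet_Ioo fun θ hθ => hinner1 θ hθ
      _ = R * ∫ θ in Ioo (-Real.pi) Real.pi, A (R, θ) := integral_const_mul _ _
  have hI2 : ∫ p in Ω, D2 p = 0 := by
    have hint : Integrable (fun z : ℝ × ℝ => D2 z)
        (((volume : Measure ℝ).restrict (Ioo 0 R)).prod
          ((volume : Measure ℝ).restrict (Ioo (-Real.pi) Real.pi))) := by
      rw [← hprod]; exact hD2int
    calc ∫ p in Ω, D2 p
        = ∫ r in Ioo (0:ℝ) R, ∫ θ in Ioo (-Real.pi) Real.pi, D2 (r, θ) := by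
          rw [hprod]; exact MeasureTheory.integral_prod _ hint
      _ = ∫ r in Ioo (0:ℝ) R, (0:ℝ) :=
          setIntegral_congr_fun measurableSet_Ioo fun r hr => hinner2 r hr
      _ = 0 := by simp
  rw [hstep1, hstep2]
  calc ∫ p in Ω, p.1 * g (Φ p.1 p.2)
      = ∫ p in Ω, (D1 p + D2 p) := by simp_rw [hsum]
    _ = (∫ p in Ω, D1 p) + ∫ p in Ω, D2 p := integral_add hD1int hD2int
    _ = R * ∫ θ in Ioo (-Real.pi) Real.pi, A (R, θ) := by rw [hI1, hI2, add_zero]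
    _ = R * ∫ θ in (-Real.pi)..Real.pi, fderiv ℝ f (Φ R θ) (uv θ) := by
        rw [intervalIntegral.integral_of_le hπ.le, integral_Ioc_eq_integral_Ioo]


lemma inner_gradient (f : E2 → ℝ) (x v : E2) :
    (inner ℝ (gradient f x) v : ℝ) = fderiv ℝ f x v := by
  rw [gradient]
  exact InnerProductSpace.toDual_symm_apply

lemma lap_bound {C : ℝ} (f : E2 → ℝ) (x : E2) (hf : ContDiffAt ℝ 2 f x)
    (hC : ‖iteratedFDeriv ℝ 2 f x‖ ≤ C) : |laplacian2 f x| ≤ 2 * C := by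
  rw [laplacian2_eq f x hf]
  have key : ∀ i : Fin 2, |iteratedFDeriv ℝ 2 f x
      ![EuclideanSpace.single i (1:ℝ), EuclideanSpace.single i (1:ℝ)]| ≤ C := by
    intro i
    have h := (iteratedFDeriv ℝ 2 f x).le_opNorm
      ![EuclideanSpace.single i (1:ℝ), EuclideanSpace.single i (1:ℝ)]
    have h2 : ∏ j : Fin 2, ‖(![EuclideanSpace.single i (1:ℝ),
        EuclideanSpace.single i (1:ℝ)] : Fin 2 → E2) j‖ = 1 := by
      rw [Fin.prod_univ_two]
      simp [EuclideanSpace.norm_single]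
    rw [h2, mul_one] at h
    calc |iteratedFDeriv ℝ 2 f x _| ≤ ‖iteratedFDeriv ℝ 2 f x‖ := h
      _ ≤ C := hC
  calc |iteratedFDeriv ℝ 2 f x ![EuclideanSpace.single 0 (1:ℝ), EuclideanSpace.single 0 (1:ℝ)]
        + iteratedFDeriv ℝ 2 f x ![EuclideanSpace.single 1 (1:ℝ), EuclideanSpace.single 1 (1:ℝ)]|
      ≤ _ + _ := abs_add_le _ _
    _ ≤ 2 * C := by linarith [key 0, key 1]

lemma lap_integrableOn {R : ℝ} (f : E2 → ℝ)
    (hf : ContDiffOn ℝ 2 f (closedBall 0 R))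
    (hc2 : ContinuousOn (fun x => iteratedFDeriv ℝ 2 f x) (closedBall (0:E2) R)) :
    IntegrableOn (laplacian2 f) (ball (0:E2) R) := by
  have hg : ContinuousOn (fun x =>
      iteratedFDeriv ℝ 2 f x ![EuclideanSpace.single 0 (1:ℝ), EuclideanSpace.single 0 (1:ℝ)]
      + iteratedFDeriv ℝ 2 f x ![EuclideanSpace.single 1 (1:ℝ), EuclideanSpace.single 1 (1:ℝ)])
      (closedBall (0:E2) R) :=
    (hc2.eval continuousOn_const).add (hc2.eval continuousOn_const)
  have hint : IntegrableOn (fun x =>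
      iteratedFDeriv ℝ 2 f x ![EuclideanSpace.single 0 (1:ℝ), EuclideanSpace.single 0 (1:ℝ)]
      + iteratedFDeriv ℝ 2 f x ![EuclideanSpace.single 1 (1:ℝ), EuclideanSpace.single 1 (1:ℝ)])
      (ball (0:E2) R) :=
    (hg.integrableOn_compact (isCompact_closedBall _ _)).mono_set ball_subset_closedBall
  refine hint.congr_fun (fun x hx => ?_) measurableSet_ball
  exact (laplacian2_eq f x (hf.contDiffAt
    (Filter.mem_of_superset (isOpen_ball.mem_nhds hx) ball_subset_closedBall))).symm

end MCA

open MCA Topology in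
set_option maxHeartbeats 2000000 in
/-- Let `R > 0`, `m₀ > 0`, `T > 0`. Suppose `m, φ : B̄_R × [0,T] → ℝ` are
`C²` in the space variable with spatial derivatives jointly continuous, `m` is `C¹` in time,
`ρ : ℝ × [0,T] → ℝ` is `2π`-periodic in its first argument and `C¹`, and `X_c : [0,T] → ℝ`
is `C¹`, and that they satisfy: `∂_t m = Δm − m₀ Δφ` in `B_R × (0,T)`; the homogeneous
Neumann condition `∂_r m = 0` on the boundary circle; and the kinematic condition
`∂_t ρ(θ,t) + X_c'(t) cos θ = ∂_r φ(R cos θ, R sin θ, t)`. Then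
`M(t) := ∫_{B_R} m(x,t) dx + m₀ R ∫_{−π}^{π} ρ(θ,t) dθ` is constant on `[0,T]`. -/
theorem linearized_myosin_mass_conservation
    (R m₀ T : ℝ) (hR : 0 < R) (hm₀ : 0 < m₀) (hT : 0 < T)
    (m φ : EuclideanSpace ℝ (Fin 2) → ℝ → ℝ) (ρ : ℝ → ℝ → ℝ) (Xc : ℝ → ℝ)
    -- `m` and `φ` are C² in the space variable
    (hm_space : ∀ t ∈ Icc (0:ℝ) T, ContDiffOn ℝ 2 (fun x => m x t) (closedBall 0 R))
    (hφ_space : ∀ t ∈ Icc (0:ℝ) T, ContDiffOn ℝ 2 (fun x => φ x t) (closedBall 0 R))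
    -- spatial derivatives up to order 2 are jointly continuous in (x,t)
    (hm_cont : ∀ k : ℕ, k ≤ 2 → ContinuousOn
      (fun p : EuclideanSpace ℝ (Fin 2) × ℝ => iteratedFDeriv ℝ k (fun x => m x p.2) p.1)
      (closedBall 0 R ×ˢ Icc (0:ℝ) T))
    (hφ_cont : ∀ k : ℕ, k ≤ 2 → ContinuousOn
      (fun p : EuclideanSpace ℝ (Fin 2) × ℝ => iteratedFDeriv ℝ k (fun x => φ x p.2) p.1)
      (closedBall 0 R ×ˢ Icc (0:ℝ) T))
    -- `m` is C¹ in time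
    (hm_time : ∀ x ∈ closedBall (0 : EuclideanSpace ℝ (Fin 2)) R,
      ContDiffOn ℝ 1 (m x) (Icc (0:ℝ) T))
    -- `ρ` is 2π-periodic in its first argument and C¹
    (hρ_per : ∀ θ t : ℝ, ρ (θ + 2 * Real.pi) t = ρ θ t)
    (hρ_C1 : ContDiff ℝ 1 (Function.uncurry ρ))
    -- `X_c` is C¹
    (hXc : ContDiffOn ℝ 1 Xc (Icc (0:ℝ) T))
    -- the linearized myosin equation `∂_t m = Δm − m₀ Δφ` in `B_R × (0,T)`
    (heq : ∀ x ∈ ball (0 : EuclideanSpace ℝ (Fin 2)) R, ∀ t ∈ Ioo (0:ℝ) T,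
      deriv (m x) t = laplacian2 (fun y => m y t) x - m₀ * laplacian2 (fun y => φ y t) x)
    -- homogeneous Neumann condition for `m` on the boundary circle
    (hneu : ∀ θ : ℝ, ∀ t ∈ Icc (0:ℝ) T,
      ⟪gradient (fun y => m y t) (pt2 (R * Real.cos θ) (R * Real.sin θ)),
        pt2 (Real.cos θ) (Real.sin θ)⟫ = (0:ℝ))
    -- kinematic condition on the boundary circle
    (hkin : ∀ θ : ℝ, ∀ t ∈ Ioo (0:ℝ) T,
      deriv (ρ θ) t + deriv Xc t * Real.cos θ
        = ⟪gradient (fun y => φ y t) (pt2 (R * Real.cos θ) (R * Real.sin θ)),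
            pt2 (Real.cos θ) (Real.sin θ)⟫) :
    ∀ t₁ ∈ Icc (0:ℝ) T, ∀ t₂ ∈ Icc (0:ℝ) T,
      (∫ x in ball (0 : EuclideanSpace ℝ (Fin 2)) R, m x t₁)
          + m₀ * R * ∫ θ in (-Real.pi)..Real.pi, ρ θ t₁
        = (∫ x in ball (0 : EuclideanSpace ℝ (Fin 2)) R, m x t₂)
            + m₀ * R * ∫ θ in (-Real.pi)..Real.pi, ρ θ t₂ := by
  have hππ : -Real.pi < Real.pi := by linarith [Real.pi_pos]
  -- slices of the joint continuity hypotheses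
  have hm_slice : ∀ k : ℕ, k ≤ 2 → ∀ t ∈ Icc (0:ℝ) T, ContinuousOn
      (fun x => iteratedFDeriv ℝ k (fun y => m y t) x) (closedBall (0:E2) R) := by
    intro k hk t ht
    exact (hm_cont k hk).comp (continuous_id.prodMk continuous_const).continuousOn
      (fun x hx => ⟨hx, ht⟩)
  have hφ_slice : ∀ k : ℕ, k ≤ 2 → ∀ t ∈ Icc (0:ℝ) T, ContinuousOn
      (fun x => iteratedFDeriv ℝ k (fun y => φ y t) x) (closedBall (0:E2) R) := by
    intro k hk t ht
    exact (hφ_cont k hk).comp (continuous_id.prodMk continuous_const).continuousOn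
      (fun x hx => ⟨hx, ht⟩)
  -- joint continuity of m itself
  have hmJ : ContinuousOn (fun p : E2 × ℝ => m p.1 p.2) (closedBall 0 R ×ˢ Icc (0:ℝ) T) := by
    simpa only [iteratedFDeriv_zero_apply] using
      (hm_cont 0 (by norm_num)).eval (continuousOn_const (c := (0 : Fin 0 → E2)))
  -- the partial time derivative of ρ
  set pd : ℝ → ℝ → ℝ := fun θ t => fderiv ℝ (Function.uncurry ρ) (θ, t) ((0:ℝ), (1:ℝ))
    with hpddef
  have hpd : ∀ θ t : ℝ, HasDerivAt (ρ θ) (pd θ t) t := by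
    intro θ t
    have hu : HasFDerivAt (Function.uncurry ρ) (fderiv ℝ (Function.uncurry ρ) (θ, t)) (θ, t) :=
      (hρ_C1.differentiable one_ne_zero (θ, t)).hasFDerivAt
    have hline : HasDerivAt (fun s : ℝ => ((θ, s) : ℝ × ℝ)) ((0:ℝ), (1:ℝ)) t :=
      (hasDerivAt_const t θ).prodMk (hasDerivAt_id t)
    exact hu.comp_hasDerivAt t hline
  have hpdc : Continuous (fun p : ℝ × ℝ => pd p.1 p.2) := by
    have h := hρ_C1.continuous_fderiv one_ne_zero
    exact (ContinuousLinearMap.apply ℝ ℝ (((0:ℝ), (1:ℝ)) : ℝ × ℝ)).continuous.comp h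
  -- uniform bounds on second space derivatives
  have hKmT : IsCompact (closedBall (0:E2) R ×ˢ Icc (0:ℝ) T) :=
    (isCompact_closedBall _ _).prod isCompact_Icc
  obtain ⟨Cm, hCm⟩ := hKmT.exists_bound_of_continuousOn (hm_cont 2 le_rfl)
  obtain ⟨Cφ, hCφ⟩ := hKmT.exists_bound_of_continuousOn (hφ_cont 2 le_rfl)
  obtain ⟨C0, hC0⟩ := hKmT.exists_bound_of_continuousOn hmJ
  -- pointwise bound on the time derivative of m
  have hb : ∀ x ∈ ball (0:E2) R, ∀ t ∈ Ioo (0:ℝ) T,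
      |deriv (m x) t| ≤ 2 * Cm + m₀ * (2 * Cφ) := by
    intro x hx t ht
    have ht' : t ∈ Icc (0:ℝ) T := ⟨ht.1.le, ht.2.le⟩
    have hcdm : ContDiffAt ℝ 2 (fun y => m y t) x :=
      (hm_space t ht').contDiffAt
        (Filter.mem_of_superset (isOpen_ball.mem_nhds hx) ball_subset_closedBall)
    have hcdφ : ContDiffAt ℝ 2 (fun y => φ y t) x :=
      (hφ_space t ht').contDiffAt
        (Filter.mem_of_superset (isOpen_ball.mem_nhds hx) ball_subset_closedBall)
    have h1 := MCA.lap_bound (fun y => m y t) x hcdm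
      (hCm (x, t) ⟨ball_subset_closedBall hx, ht'⟩)
    have h2 := MCA.lap_bound (fun y => φ y t) x hcdφ
      (hCφ (x, t) ⟨ball_subset_closedBall hx, ht'⟩)
    rw [heq x hx t ht]
    calc |laplacian2 (fun y => m y t) x - m₀ * laplacian2 (fun y => φ y t) x|
        ≤ |laplacian2 (fun y => m y t) x| + |m₀ * laplacian2 (fun y => φ y t) x| :=
          abs_sub _ _
      _ = |laplacian2 (fun y => m y t) x| + m₀ * |laplacian2 (fun y => φ y t) x| := by
          rw [abs_mul, abs_of_pos hm₀]
      _ ≤ 2 * Cm + m₀ * (2 * Cφ) := by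
          have := mul_le_mul_of_nonneg_left h2 hm₀.le
          linarith
  -- the Neumann condition kills the m-term
  have hm_div : ∀ t ∈ Icc (0:ℝ) T,
      ∫ x in ball (0:E2) R, laplacian2 (fun y => m y t) x = 0 := by
    intro t ht
    rw [MCA.disk_div hR (fun x => m x t) (hm_space t ht)
      (hm_slice 1 (by norm_num) t ht) (hm_slice 2 le_rfl t ht)]
    have hz : ∀ θ : ℝ, fderiv ℝ (fun y => m y t) (Φ R θ) (uv θ) = 0 := by
      intro θ
      have h := hneu θ t ht
      rwa [MCA.inner_gradient, ← MCA.Φ_eq_pt2, ← MCA.uv_eq_pt2] at h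
    rw [intervalIntegral.integral_congr (g := fun _ => (0:ℝ)) (fun θ _ => hz θ)]
    simp
  -- the kinematic condition for the φ-term
  have hφ_div : ∀ t ∈ Ioo (0:ℝ) T,
      ∫ x in ball (0:E2) R, laplacian2 (fun y => φ y t) x
        = R * ∫ θ in (-Real.pi)..Real.pi, pd θ t := by
    intro t ht
    have ht' : t ∈ Icc (0:ℝ) T := ⟨ht.1.le, ht.2.le⟩
    rw [MCA.disk_div hR (fun x => φ x t) (hφ_space t ht')
      (hφ_slice 1 (by norm_num) t ht') (hφ_slice 2 le_rfl t ht')]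
    have hz : ∀ θ : ℝ, fderiv ℝ (fun y => φ y t) (Φ R θ) (uv θ)
        = pd θ t + deriv Xc t * Real.cos θ := by
      intro θ
      have h := hkin θ t ht
      rw [MCA.inner_gradient, ← MCA.Φ_eq_pt2, ← MCA.uv_eq_pt2] at h
      rw [← h, (hpd θ t).deriv]
    rw [intervalIntegral.integral_congr
      (g := fun θ => pd θ t + deriv Xc t * Real.cos θ) (fun θ _ => hz θ)]
    have hint1 : IntervalIntegrable (fun θ => pd θ t) volume (-Real.pi) Real.pi :=
      (hpdc.comp (continuous_id.prodMk continuous_const)).intervalIntegrable _ _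
    have hint2 : IntervalIntegrable (fun θ => deriv Xc t * Real.cos θ)
        volume (-Real.pi) Real.pi :=
      (continuous_const.mul Real.continuous_cos).intervalIntegrable _ _
    rw [intervalIntegral.integral_add hint1 hint2]
    have : ∫ θ in (-Real.pi)..Real.pi, deriv Xc t * Real.cos θ = 0 := by
      rw [intervalIntegral.integral_const_mul, integral_cos]
      simp
    rw [this, add_zero]
  -- integrability of the Laplacians
  have hlapm_int : ∀ t ∈ Icc (0:ℝ) T,
      IntegrableOn (laplacian2 (fun y => m y t)) (ball (0:E2) R) := fun t ht =>
    MCA.lap_integrableOn _ (hm_space t ht) (hm_slice 2 le_rfl t ht)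
  have hlapφ_int : ∀ t ∈ Icc (0:ℝ) T,
      IntegrableOn (laplacian2 (fun y => φ y t)) (ball (0:E2) R) := fun t ht =>
    MCA.lap_integrableOn _ (hφ_space t ht) (hφ_slice 2 le_rfl t ht)
  -- derivative of the bulk term
  have hF : ∀ t₀ ∈ Ioo (0:ℝ) T, HasDerivAt (fun t => ∫ x in ball (0:E2) R, m x t)
      (∫ x in ball (0:E2) R, deriv (m x) t₀) t₀ := by
    intro t₀ ht₀
    set ε : ℝ := min t₀ (T - t₀) with hεdef
    have hεpos : 0 < ε := lt_min ht₀.1 (by linarith [ht₀.2])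
    have hsub : ball t₀ ε ⊆ Ioo (0:ℝ) T := by
      intro t ht
      rw [mem_ball, Real.dist_eq, abs_lt] at ht
      have h1 : ε ≤ t₀ := min_le_left _ _
      have h2 : ε ≤ T - t₀ := min_le_right _ _
      constructor <;> linarith [ht.1, ht.2]
    have hmeas : ∀ᶠ t in 𝓝 t₀, AEStronglyMeasurable (fun x => m x t)
        (volume.restrict (ball (0:E2) R)) := by
      refine Filter.eventually_of_mem (isOpen_Ioo.mem_nhds ht₀) (fun t ht => ?_)
      have hc : ContinuousOn (fun x => m x t) (closedBall (0:E2) R) :=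
        hmJ.comp (continuous_id.prodMk continuous_const).continuousOn
          (fun x hx => ⟨hx, ⟨ht.1.le, ht.2.le⟩⟩)
      exact (hc.mono ball_subset_closedBall).aestronglyMeasurable measurableSet_ball
    have hFint : Integrable (fun x => m x t₀) (volume.restrict (ball (0:E2) R)) := by
      have hc : ContinuousOn (fun x => m x t₀) (closedBall (0:E2) R) :=
        hmJ.comp (continuous_id.prodMk continuous_const).continuousOn
          (fun x hx => ⟨hx, ⟨ht₀.1.le, ht₀.2.le⟩⟩)
      exact (hc.integrableOn_compact (isCompact_closedBall _ _)).mono_set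
        ball_subset_closedBall
    have hintLap : IntegrableOn (fun x => laplacian2 (fun y => m y t₀) x
        - m₀ * laplacian2 (fun y => φ y t₀) x) (ball (0:E2) R) :=
      (hlapm_int t₀ ⟨ht₀.1.le, ht₀.2.le⟩).sub
        ((hlapφ_int t₀ ⟨ht₀.1.le, ht₀.2.le⟩).const_mul m₀)
    have hF'meas : AEStronglyMeasurable (fun x => deriv (m x) t₀)
        (volume.restrict (ball (0:E2) R)) := by
      refine hintLap.aestronglyMeasurable.congr ?_
      refine (ae_restrict_iff' measurableSet_ball).2 (Filter.Eventually.of_forall fun x hx => ?_)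
      exact (heq x hx t₀ ht₀).symm
    have hbound : ∀ᵐ x ∂(volume.restrict (ball (0:E2) R)), ∀ t ∈ ball t₀ ε,
        ‖deriv (m x) t‖ ≤ 2 * Cm + m₀ * (2 * Cφ) := by
      refine (ae_restrict_iff' measurableSet_ball).2 (Filter.Eventually.of_forall fun x hx => ?_)
      intro t ht
      rw [Real.norm_eq_abs]
      exact hb x hx t (hsub ht)
    have hbound_int : Integrable (fun _ : E2 => 2 * Cm + m₀ * (2 * Cφ))
        (volume.restrict (ball (0:E2) R)) :=
      integrableOn_const measure_ball_lt_top.ne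
    have hdiff : ∀ᵐ x ∂(volume.restrict (ball (0:E2) R)), ∀ t ∈ ball t₀ ε,
        HasDerivAt (fun s => m x s) (deriv (m x) t) t := by
      refine (ae_restrict_iff' measurableSet_ball).2 (Filter.Eventually.of_forall fun x hx => ?_)
      intro t ht
      have ht' := hsub ht
      have hcd := (hm_time x (ball_subset_closedBall hx)).contDiffAt
        (Icc_mem_nhds ht'.1 ht'.2)
      exact (hcd.differentiableAt one_ne_zero).hasDerivAt
    exact (hasDerivAt_integral_of_dominated_loc_of_deriv_le
      (F := fun t x => m x t) (F' := fun t x => deriv (m x) t)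
      (ball_mem_nhds t₀ hεpos) hmeas hFint hF'meas hbound hbound_int hdiff).2
  -- derivative of the boundary term
  have hG : ∀ t₀ ∈ Ioo (0:ℝ) T, HasDerivAt
      (fun t => ∫ θ in Ioc (-Real.pi) Real.pi, ρ θ t)
      (∫ θ in Ioc (-Real.pi) Real.pi, pd θ t₀) t₀ := by
    intro t₀ ht₀
    have hKθ : IsCompact (Icc (-Real.pi) Real.pi ×ˢ Icc (t₀ - 1) (t₀ + 1)) :=
      isCompact_Icc.prod isCompact_Icc
    obtain ⟨Cρ, hCρ⟩ := hKθ.exists_bound_of_continuousOn hpdc.continuousOn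
    have hmeas : ∀ᶠ t in 𝓝 t₀, AEStronglyMeasurable (fun θ => ρ θ t)
        (volume.restrict (Ioc (-Real.pi) Real.pi)) := by
      refine Filter.Eventually.of_forall fun t => ?_
      exact (hρ_C1.continuous.comp (continuous_id.prodMk continuous_const)).aestronglyMeasurable
    have hFint : Integrable (fun θ => ρ θ t₀)
        (volume.restrict (Ioc (-Real.pi) Real.pi)) :=
      (hρ_C1.continuous.comp (continuous_id.prodMk continuous_const)).integrableOn_Ioc
    have hF'meas : AEStronglyMeasurable (fun θ => pd θ t₀)
        (volume.restrict (Ioc (-Real.pi) Real.pi)) :=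
      (hpdc.comp (continuous_id.prodMk continuous_const)).aestronglyMeasurable
    have hbound : ∀ᵐ θ ∂(volume.restrict (Ioc (-Real.pi) Real.pi)), ∀ t ∈ ball t₀ 1,
        ‖pd θ t‖ ≤ Cρ := by
      refine (ae_restrict_iff' measurableSet_Ioc).2 (Filter.Eventually.of_forall fun θ hθ => ?_)
      intro t ht
      rw [mem_ball, Real.dist_eq, abs_lt] at ht
      exact hCρ (θ, t) ⟨⟨hθ.1.le, hθ.2⟩, ⟨by linarith [ht.1], by linarith [ht.2]⟩⟩
    have hbound_int : Integrable (fun _ : ℝ => Cρ)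
        (volume.restrict (Ioc (-Real.pi) Real.pi)) :=
      integrableOn_const (by rw [Real.volume_Ioc]; exact ENNReal.ofReal_ne_top)
    have hdiff : ∀ᵐ θ ∂(volume.restrict (Ioc (-Real.pi) Real.pi)), ∀ t ∈ ball t₀ 1,
        HasDerivAt (fun s => ρ θ s) (pd θ t) t :=
      Filter.Eventually.of_forall fun θ => fun t _ => hpd θ t
    exact (hasDerivAt_integral_of_dominated_loc_of_deriv_le
      (F := fun t θ => ρ θ t) (F' := fun t θ => pd θ t)
      (ball_mem_nhds t₀ (by norm_num : (0:ℝ) < 1)) hmeas hFint hF'meas hbound hbound_int hdiff).2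
  -- derivative of M is zero
  have hMd : ∀ t₀ ∈ Ioo (0:ℝ) T, HasDerivAt
      (fun t => (∫ x in ball (0:E2) R, m x t)
        + m₀ * R * ∫ θ in (-Real.pi)..Real.pi, ρ θ t) 0 t₀ := by
    intro t₀ ht₀
    have ht' : t₀ ∈ Icc (0:ℝ) T := ⟨ht₀.1.le, ht₀.2.le⟩
    have h2' : HasDerivAt (fun t => m₀ * R * ∫ θ in (-Real.pi)..Real.pi, ρ θ t)
        (m₀ * R * ∫ θ in Ioc (-Real.pi) Real.pi, pd θ t₀) t₀ := by
      have h := (hG t₀ ht₀).const_mul (m₀ * R)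
      simp_rw [intervalIntegral.integral_of_le hππ.le]
      exact h
    have hsum := (hF t₀ ht₀).add h2'
    have hval : (∫ x in ball (0:E2) R, deriv (m x) t₀)
        + m₀ * R * ∫ θ in Ioc (-Real.pi) Real.pi, pd θ t₀ = 0 := by
      have e1 : ∫ x in ball (0:E2) R, deriv (m x) t₀
          = ∫ x in ball (0:E2) R, (laplacian2 (fun y => m y t₀) x
              - m₀ * laplacian2 (fun y => φ y t₀) x) :=
        setIntegral_congr_fun measurableSet_ball fun x hx => heq x hx t₀ ht₀
      have e2 : ∫ x in ball (0:E2) R, (laplacian2 (fun y => m y t₀) x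
            - m₀ * laplacian2 (fun y => φ y t₀) x)
          = (∫ x in ball (0:E2) R, laplacian2 (fun y => m y t₀) x)
            - m₀ * ∫ x in ball (0:E2) R, laplacian2 (fun y => φ y t₀) x := by
        rw [integral_sub (hlapm_int t₀ ht') ((hlapφ_int t₀ ht').const_mul m₀),
          integral_const_mul]
      have e3 := hm_div t₀ ht'
      have e4 := hφ_div t₀ ht₀
      have e5 : ∫ θ in (-Real.pi)..Real.pi, pd θ t₀
          = ∫ θ in Ioc (-Real.pi) Real.pi, pd θ t₀ :=
        intervalIntegral.integral_of_le hππ.le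
      rw [e1, e2, e3, e4, ← e5]
      ring
    rw [← hval]
    exact hsum
  -- continuity of M on [0, T]
  have hFc : ContinuousOn (fun t => ∫ x in ball (0:E2) R, m x t) (Icc (0:ℝ) T) := by
    apply MeasureTheory.continuousOn_of_dominated (bound := fun _ : E2 => C0)
    · intro t ht
      have hc : ContinuousOn (fun x => m x t) (closedBall (0:E2) R) :=
        hmJ.comp (continuous_id.prodMk continuous_const).continuousOn
          (fun x hx => ⟨hx, ht⟩)
      exact (hc.mono ball_subset_closedBall).aestronglyMeasurable measurableSet_ball
    · intro t ht
      refine (ae_restrict_iff' measurableSet_ball).2 (Filter.Eventually.of_forall fun x hx => ?_)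
      exact hC0 (x, t) ⟨ball_subset_closedBall hx, ht⟩
    · exact integrableOn_const measure_ball_lt_top.ne
    · refine (ae_restrict_iff' measurableSet_ball).2 (Filter.Eventually.of_forall fun x hx => ?_)
      exact (hm_time x (ball_subset_closedBall hx)).continuousOn
  have hGc : ContinuousOn (fun t => ∫ θ in Ioc (-Real.pi) Real.pi, ρ θ t) (Icc (0:ℝ) T) := by
    have hKρ : IsCompact (Icc (-Real.pi) Real.pi ×ˢ Icc (0:ℝ) T) :=
      isCompact_Icc.prod isCompact_Icc
    obtain ⟨Cρ', hCρ'⟩ := hKρ.exists_bound_of_continuousOn hρ_C1.continuous.continuousOn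
    apply MeasureTheory.continuousOn_of_dominated (bound := fun _ : ℝ => Cρ')
    · intro t ht
      exact (hρ_C1.continuous.comp (continuous_id.prodMk continuous_const)).aestronglyMeasurable
    · intro t ht
      refine (ae_restrict_iff' measurableSet_Ioc).2 (Filter.Eventually.of_forall fun θ hθ => ?_)
      exact hCρ' (θ, t) ⟨⟨hθ.1.le, hθ.2⟩, ht⟩
    · exact integrableOn_const (by rw [Real.volume_Ioc]; exact ENNReal.ofReal_ne_top)
    · refine (ae_restrict_iff' measurableSet_Ioc).2 (Filter.Eventually.of_forall fun θ hθ => ?_)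
      exact (hρ_C1.continuous.comp (continuous_const.prodMk continuous_id)).continuousOn
  have hMc : ContinuousOn (fun t => (∫ x in ball (0:E2) R, m x t)
      + m₀ * R * ∫ θ in (-Real.pi)..Real.pi, ρ θ t) (Icc (0:ℝ) T) := by
    simp_rw [intervalIntegral.integral_of_le hππ.le]
    exact hFc.add (continuousOn_const.mul hGc)
  -- conclusion
  have main : ∀ s₁ ∈ Icc (0:ℝ) T, ∀ s₂ ∈ Icc (0:ℝ) T, s₁ ≤ s₂ →
      ((∫ x in ball (0:E2) R, m x s₁) + m₀ * R * ∫ θ in (-Real.pi)..Real.pi, ρ θ s₁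
        = (∫ x in ball (0:E2) R, m x s₂)
          + m₀ * R * ∫ θ in (-Real.pi)..Real.pi, ρ θ s₂) := by
    intro s₁ hs₁ s₂ hs₂ hle
    have hIcc : Icc s₁ s₂ ⊆ Icc (0:ℝ) T := Icc_subset_Icc hs₁.1 hs₂.2
    have hIoo : Ioo s₁ s₂ ⊆ Ioo (0:ℝ) T := Ioo_subset_Ioo hs₁.1 hs₂.2
    have hftc := intervalIntegral.integral_eq_sub_of_hasDeriv_right_of_le hle
      (hMc.mono hIcc) (fun t ht => ((hMd t (hIoo ht)).hasDerivWithinAt))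
      (intervalIntegrable_const (c := (0:ℝ)))
    simp only [intervalIntegral.integral_const, smul_zero, smul_eq_mul, mul_zero] at hftc
    linarith [hftc]
  intro t₁ ht₁ t₂ ht₂
  rcases le_total t₁ t₂ with hle | hle
  · exact main t₁ ht₁ t₂ ht₂ hle
  · exact (main t₂ ht₂ t₁ ht₁ hle).symm
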